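/- For m ≥ 5, in H = K_{m,m} \ E(C_{2m}), every resolving set has cardinality at least ⌊4m/5⌋. -/

import Mathlib

/-- `W` resolves `G`: every vertex is determined by its distance vector to `W`. -/
def Resolves {V : Type*} (G : SimpleGraph V) (W : Set V) : Prop :=
  ∀ u v : V, (∀ w ∈ W, G.dist u w = G.dist v w) → u = v

/-- Metric dimension: minimum cardinality of a (finite) resolving set. -/
noncomputable def metricDim {V : Type*} (G : SimpleGraph V) : ℕ :=
  sInf {k | ∃ W : Set V, W.Finite ∧ W.ncard = k ∧ Resolves G W}
/-- `K_{m,m}` minus the Hamiltonian cycle `x₁ y₁ x₂ y₂ … x_m y_m x₁` (0-indexed: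
cycle edges are `xᵢ yᵢ` and `yᵢ x_{i+1 mod m}`). -/
def cycGraph (m : ℕ) : SimpleGraph (Fin m ⊕ Fin m) where
  Adj u v := match u, v with
    | Sum.inl i, Sum.inr j => j ≠ i ∧ (i : ℕ) ≠ ((j : ℕ) + 1) % m
    | Sum.inr j, Sum.inl i => j ≠ i ∧ (i : ℕ) ≠ ((j : ℕ) + 1) % m
    | _, _ => False
  symm := ⟨by rintro (i|i) (j|j) h <;> exact h⟩
  loopless := ⟨by rintro (i|i) h <;> exact h⟩

/-- Position `k` (taken mod `2m`) along the Hamiltonian cycle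
`x₁ y₁ x₂ y₂ …`: even positions `2i ↦ xᵢ`, odd positions `2i+1 ↦ yᵢ`. -/
def cyc (m : ℕ) [NeZero m] (k : ℕ) : Fin m ⊕ Fin m :=
  if (k % (2 * m)) % 2 = 0 then
    Sum.inl ⟨k % (2 * m) / 2, by
      have hm : 0 < m := Nat.pos_of_ne_zero (NeZero.ne m)
      have h : k % (2 * m) < 2 * m := Nat.mod_lt _ (by omega)
      exact Nat.div_lt_of_lt_mul (by omega)⟩
  else
    Sum.inr ⟨k % (2 * m) / 2, by
      have hm : 0 < m := Nat.pos_of_ne_zero (NeZero.ne m)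
      have h : k % (2 * m) < 2 * m := Nat.mod_lt _ (by omega)
      exact Nat.div_lt_of_lt_mul (by omega)⟩

/-- `W` has a gap of exactly `L` vertices starting at cycle position `s`:
the positions `s` and `s+L+1` are in `W` and the `L` positions strictly between are not. -/
def IsGap (m : ℕ) [NeZero m] (W : Set (Fin m ⊕ Fin m)) (s L : ℕ) : Prop :=
  cyc m s ∈ W ∧ cyc m (s + L + 1) ∈ W ∧ ∀ t, 1 ≤ t → t ≤ L → cyc m (s + t) ∉ W


section Aux
variable {m : ℕ} [NeZero m]

lemma val_add_one' (hm : 5 ≤ m) (j : Fin m) : ((j + 1 : Fin m) : ℕ) = ((j : ℕ) + 1) % m := by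
  rw [Fin.val_add, Fin.val_one', Nat.mod_eq_of_lt (show 1 < m by omega)]

lemma cyc_adj (hm : 5 ≤ m) (i j : Fin m) :
    (cycGraph m).Adj (Sum.inl i) (Sum.inr j) ↔ j ≠ i ∧ i ≠ j + 1 := by
  show (j ≠ i ∧ (i : ℕ) ≠ ((j : ℕ) + 1) % m) ↔ _
  rw [← val_add_one' hm j, ne_eq, ne_eq, Fin.val_eq_val]

lemma cyc_adj' (hm : 5 ≤ m) (i j : Fin m) :
    (cycGraph m).Adj (Sum.inr j) (Sum.inl i) ↔ j ≠ i ∧ i ≠ j + 1 := cyc_adj hm i j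

lemma exists_ne4 (hm : 5 ≤ m) (a b c d : Fin m) :
    ∃ k : Fin m, k ≠ a ∧ k ≠ b ∧ k ≠ c ∧ k ≠ d := by
  have h4 : ({a, b, c, d} : Finset (Fin m)).card ≤ 4 := by
    refine le_trans (Finset.card_insert_le _ _) ?_
    refine Nat.add_le_add_right ?_ 1
    refine le_trans (Finset.card_insert_le _ _) ?_
    refine Nat.add_le_add_right ?_ 1
    refine le_trans (Finset.card_insert_le _ _) ?_
    simpa using Nat.le_refl 2
  have hpos : 0 < (({a, b, c, d} : Finset (Fin m))ᶜ).card := by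
    rw [Finset.card_compl]
    have : Fintype.card (Fin m) = m := Fintype.card_fin m
    omega
  obtain ⟨k, hk⟩ := Finset.card_pos.mp hpos
  simp only [Finset.mem_compl, Finset.mem_insert, Finset.mem_singleton, not_or] at hk
  exact ⟨k, hk.1, hk.2.1, hk.2.2.1, hk.2.2.2⟩

end Aux

section Dist
variable {m : ℕ} [NeZero m]
open SimpleGraph Sum

lemma fin_sub_ne (i : Fin m) (k : Fin m) (h : k ≠ i - 1) : i ≠ k + 1 := by
  intro he
  exact h (by rw [he]; open Fin.CommRing in ring)

lemma dist_ll (hm : 5 ≤ m) (i j : Fin m) (hij : i ≠ j) :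
    (cycGraph m).dist (inl i) (inl j) = 2 := by
  obtain ⟨k, hk1, hk2, hk3, hk4⟩ := exists_ne4 hm i j (i - 1) (j - 1)
  have h1 : (cycGraph m).Adj (inl i) (inr k) := (cyc_adj hm i k).mpr ⟨hk1, fin_sub_ne i k hk3⟩
  have h2 : (cycGraph m).Adj (inr k) (inl j) := (cyc_adj' hm j k).mpr ⟨hk2, fin_sub_ne j k hk4⟩
  have hle : (cycGraph m).dist (inl i) (inl j) ≤ 2 := by
    simpa using SimpleGraph.dist_le (Walk.cons h1 (Walk.cons h2 Walk.nil))
  have hpos : 0 < (cycGraph m).dist (inl i) (inl j) :=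
    Reachable.pos_dist_of_ne (Walk.cons h1 (Walk.cons h2 Walk.nil)).reachable (by simp [hij])
  have hne1 : (cycGraph m).dist (inl i) (inl j) ≠ 1 := by
    intro h
    exact (SimpleGraph.dist_eq_one_iff_adj.mp h : False)
  omega

lemma dist_rr (hm : 5 ≤ m) (i j : Fin m) (hij : i ≠ j) :
    (cycGraph m).dist (inr i) (inr j) = 2 := by
  obtain ⟨k, hk1, hk2, hk3, hk4⟩ := exists_ne4 hm (i+1) (j+1) i j
  have h1 : (cycGraph m).Adj (inr i) (inl k) := (cyc_adj' hm k i).mpr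
    ⟨fun h => hk3 h.symm, fun h => hk1 h⟩
  have h2 : (cycGraph m).Adj (inl k) (inr j) := (cyc_adj hm k j).mpr
    ⟨fun h => hk4 h.symm, fun h => hk2 h⟩
  have hle : (cycGraph m).dist (inr i) (inr j) ≤ 2 := by
    simpa using SimpleGraph.dist_le (Walk.cons h1 (Walk.cons h2 Walk.nil))
  have hpos : 0 < (cycGraph m).dist (inr i) (inr j) :=
    Reachable.pos_dist_of_ne (Walk.cons h1 (Walk.cons h2 Walk.nil)).reachable (by simp [hij])
  have hne1 : (cycGraph m).dist (inr i) (inr j) ≠ 1 := by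
    intro h
    exact (SimpleGraph.dist_eq_one_iff_adj.mp h : False)
  omega

lemma dist_lr (hm : 5 ≤ m) (i j : Fin m) (hna : ¬ (cycGraph m).Adj (inl i) (inr j)) :
    (cycGraph m).dist (inl i) (inr j) = 3 := by
  obtain ⟨a, ha1, ha2, -, -⟩ := exists_ne4 hm i (i - 1) i i
  obtain ⟨b, hb1, hb2, hb3, hb4⟩ := exists_ne4 hm a (a + 1) j (j + 1)
  have h1 : (cycGraph m).Adj (inl i) (inr a) := (cyc_adj hm i a).mpr ⟨ha1, fin_sub_ne i a ha2⟩
  have h2 : (cycGraph m).Adj (inr a) (inl b) := (cyc_adj' hm b a).mpr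
    ⟨fun h => hb1 h.symm, hb2⟩
  have h3 : (cycGraph m).Adj (inl b) (inr j) := (cyc_adj hm b j).mpr
    ⟨fun h => hb3 h.symm, hb4⟩
  have hreach : (cycGraph m).Reachable (inl i) (inr j) :=
    (Walk.cons h1 (Walk.cons h2 (Walk.cons h3 Walk.nil))).reachable
  have hle : (cycGraph m).dist (inl i) (inr j) ≤ 3 := by
    simpa using SimpleGraph.dist_le (Walk.cons h1 (Walk.cons h2 (Walk.cons h3 Walk.nil)))
  have hpos : 0 < (cycGraph m).dist (inl i) (inr j) :=
    Reachable.pos_dist_of_ne hreach (by simp)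
  have hne1 : (cycGraph m).dist (inl i) (inr j) ≠ 1 := fun h =>
    hna (SimpleGraph.dist_eq_one_iff_adj.mp h)
  have hne2 : (cycGraph m).dist (inl i) (inr j) ≠ 2 := by
    intro h
    obtain ⟨q, hq⟩ := Reachable.exists_walk_length_eq_dist hreach
    rw [h] at hq
    cases q with
    | cons hadj q' =>
      rename_i w
      cases w with
      | inl w => exact (hadj : False)
      | inr w =>
        cases q' with
        | nil => simp at hq
        | cons hadj' q'' =>
          rename_i w'
          cases w' with
          | inr w' => exact (hadj' : False)
          | inl w' =>
            have : q''.length = 0 := by simp only [SimpleGraph.Walk.length_cons] at hq; omega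
            exact absurd (SimpleGraph.Walk.eq_of_length_eq_zero this) (by simp)
  omega

lemma dist_lr_eq (hm : 5 ≤ m) (i j : Fin m) :
    (cycGraph m).dist (inl i) (inr j) = if j ≠ i ∧ i ≠ j + 1 then 1 else 3 := by
  by_cases h : j ≠ i ∧ i ≠ j + 1
  · rw [if_pos h]
    exact SimpleGraph.dist_eq_one_iff_adj.mpr ((cyc_adj hm i j).mpr h)
  · rw [if_neg h]
    exact dist_lr hm i j (fun hadj => h ((cyc_adj hm i j).mp hadj))

lemma dist_rl_eq (hm : 5 ≤ m) (i j : Fin m) :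
    (cycGraph m).dist (inr j) (inl i) = if j ≠ i ∧ i ≠ j + 1 then 1 else 3 := by
  rw [SimpleGraph.dist_comm, dist_lr_eq hm]

end Dist

/-- odd-centered missing triple: `x_i, y_i, x_{i+1} ∉ W` -/
def TripO (m : ℕ) [NeZero m] (W : Set (Fin m ⊕ Fin m)) (i : Fin m) : Prop :=
  Sum.inl i ∉ W ∧ Sum.inr i ∉ W ∧ Sum.inl (i + 1) ∉ W

/-- even-centered missing triple: `y_{i-1}, x_i, y_i ∉ W` -/
def TripE (m : ℕ) [NeZero m] (W : Set (Fin m ⊕ Fin m)) (i : Fin m) : Prop :=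
  Sum.inr (i - 1) ∉ W ∧ Sum.inl i ∉ W ∧ Sum.inr i ∉ W

section Part2
variable {m : ℕ} [NeZero m] {W : Set (Fin m ⊕ Fin m)}
open Sum

lemma fin_one_ne_zero (hm : 5 ≤ m) : (1 : Fin m) ≠ 0 := by
  intro h
  have := congrArg Fin.val h
  rw [Fin.val_one'] at this
  simp at this
  omega

lemma fin_add_one_ne (hm : 5 ≤ m) (i : Fin m) : i + 1 ≠ i := by
  intro h
  exact fin_one_ne_zero hm (by
    have : i + 1 = i + 0 := by rw [h, add_zero]
    exact add_left_cancel this)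

lemma resolve_H1a (hm : 5 ≤ m) (hW : Resolves (cycGraph m) W) (i : Fin m) :
    ¬(inr (i - 1) ∉ W ∧ inl i ∉ W ∧ inl (i + 1) ∉ W ∧ inr (i + 1) ∉ W) := by
  rintro ⟨hy0, hx0, hx1, hy1⟩
  have key : (inl i : Fin m ⊕ Fin m) = inl (i + 1) := by
    apply hW
    rintro (k | k) hk
    · have hki : k ≠ i := fun h => hx0 (by rw [← h]; exact hk)
      have hki1 : k ≠ i + 1 := fun h => hx1 (by rw [← h]; exact hk)
      rw [dist_ll hm i k (fun h => hki h.symm), dist_ll hm (i + 1) k (fun h => hki1 h.symm)]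
    · have hk0 : k ≠ i - 1 := fun h => hy0 (by rw [← h]; exact hk)
      have hk1 : k ≠ i + 1 := fun h => hy1 (by rw [← h]; exact hk)
      have t1 : i ≠ k + 1 := fin_sub_ne i k hk0
      rw [dist_lr_eq hm i k, dist_lr_eq hm (i + 1) k]
      refine if_congr ?_ rfl rfl
      constructor
      · rintro ⟨h1, -⟩
        exact ⟨hk1, fun h => h1 (add_right_cancel h).symm⟩
      · rintro ⟨-, h2⟩
        exact ⟨fun h => h2 (by rw [h]), t1⟩
  exact fin_add_one_ne hm i (Sum.inl.inj key).symm

lemma resolve_H1b (hm : 5 ≤ m) (hW : Resolves (cycGraph m) W) (i : Fin m) :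
    ¬(inl i ∉ W ∧ inr i ∉ W ∧ inr (i + 1) ∉ W ∧ inl (i + 2) ∉ W) := by
  rintro ⟨hx0, hy0, hy1, hx2⟩
  have key : (inr i : Fin m ⊕ Fin m) = inr (i + 1) := by
    apply hW
    rintro (k | k) hk
    · have hki : k ≠ i := fun h => hx0 (by rw [← h]; exact hk)
      have hki2 : k ≠ i + 2 := fun h => hx2 (by rw [← h]; exact hk)
      rw [SimpleGraph.dist_comm, dist_lr_eq hm k i, SimpleGraph.dist_comm,
        dist_lr_eq hm k (i + 1)]
      have e2 : i + 1 + 1 = i + 2 := by open Fin.CommRing in ring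
      refine if_congr ?_ rfl rfl
      constructor
      · rintro ⟨h1, h2⟩
        exact ⟨fun h => h2 h.symm, fun h => hki2 (by rw [← e2]; exact h)⟩
      · rintro ⟨g1, g2⟩
        exact ⟨fun h => hki h.symm, fun h => g1 h.symm⟩
    · have hki : k ≠ i := fun h => hy0 (by rw [← h]; exact hk)
      have hki1 : k ≠ i + 1 := fun h => hy1 (by rw [← h]; exact hk)
      rw [dist_rr hm i k (fun h => hki h.symm), dist_rr hm (i + 1) k (fun h => hki1 h.symm)]
  exact fin_add_one_ne hm i (Sum.inr.inj key).symm

lemma resolve_TripE (hm : 5 ≤ m) (hW : Resolves (cycGraph m) W) (i j : Fin m)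
    (hi : TripE m W i) (hj : TripE m W j) : i = j := by
  obtain ⟨hyi0, hxi, hyi⟩ := hi
  obtain ⟨hyj0, hxj, hyj⟩ := hj
  have key : (inl i : Fin m ⊕ Fin m) = inl j := by
    apply hW
    rintro (k | k) hk
    · have hki : k ≠ i := fun h => hxi (by rw [← h]; exact hk)
      have hkj : k ≠ j := fun h => hxj (by rw [← h]; exact hk)
      rw [dist_ll hm i k (fun h => hki h.symm), dist_ll hm j k (fun h => hkj h.symm)]
    · have h1 : k ≠ i := fun h => hyi (by rw [← h]; exact hk)
      have h2 : k ≠ j := fun h => hyj (by rw [← h]; exact hk)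
      have h3 : k ≠ i - 1 := fun h => hyi0 (by rw [← h]; exact hk)
      have h4 : k ≠ j - 1 := fun h => hyj0 (by rw [← h]; exact hk)
      rw [dist_lr_eq hm i k, dist_lr_eq hm j k, if_pos ⟨h1, fin_sub_ne i k h3⟩,
        if_pos ⟨h2, fin_sub_ne j k h4⟩]
  exact Sum.inl.inj key

lemma resolve_TripO (hm : 5 ≤ m) (hW : Resolves (cycGraph m) W) (i j : Fin m)
    (hi : TripO m W i) (hj : TripO m W j) : i = j := by
  obtain ⟨hxi, hyi, hxi1⟩ := hi
  obtain ⟨hxj, hyj, hxj1⟩ := hj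
  have key : (inr i : Fin m ⊕ Fin m) = inr j := by
    apply hW
    rintro (k | k) hk
    · have h1 : k ≠ i := fun h => hxi (by rw [← h]; exact hk)
      have h2 : k ≠ j := fun h => hxj (by rw [← h]; exact hk)
      have h3 : k ≠ i + 1 := fun h => hxi1 (by rw [← h]; exact hk)
      have h4 : k ≠ j + 1 := fun h => hxj1 (by rw [← h]; exact hk)
      rw [SimpleGraph.dist_comm, dist_lr_eq hm k i, SimpleGraph.dist_comm, dist_lr_eq hm k j,
        if_pos ⟨fun h => h1 h.symm, h3⟩, if_pos ⟨fun h => h2 h.symm, h4⟩]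
    · have h1 : k ≠ i := fun h => hyi (by rw [← h]; exact hk)
      have h2 : k ≠ j := fun h => hyj (by rw [← h]; exact hk)
      rw [dist_rr hm i k (fun h => h1 h.symm), dist_rr hm j k (fun h => h2 h.symm)]
  exact Sum.inr.inj key

end Part2

open Classical in
noncomputable def pInd (p : Prop) : ℕ := if p then 1 else 0

lemma pInd_le_one (p : Prop) : pInd p ≤ 1 := by
  unfold pInd; split_ifs <;> omega

lemma pInd_pos {p : Prop} (h : p) : pInd p = 1 := by unfold pInd; exact if_pos h

lemma pInd_neg {p : Prop} (h : ¬ p) : pInd p = 0 := by unfold pInd; exact if_neg h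

lemma pInd_or3 {p q r : Prop} (h : ¬(¬p ∧ ¬q ∧ ¬r)) : 1 ≤ pInd p + pInd q + pInd r := by
  by_cases hp : p
  · rw [pInd_pos hp]; omega
  by_cases hq : q
  · rw [pInd_pos hq]; omega
  by_cases hr : r
  · rw [pInd_pos hr]; omega
  exact absurd ⟨hp, hq, hr⟩ h

lemma pInd_or4 {p q r s : Prop} (h : ¬(¬p ∧ ¬q ∧ ¬r ∧ ¬s)) :
    1 ≤ pInd p + pInd q + pInd r + pInd s := by
  by_cases hp : p
  · rw [pInd_pos hp]; omega
  by_cases hq : q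
  · rw [pInd_pos hq]; omega
  by_cases hr : r
  · rw [pInd_pos hr]; omega
  by_cases hs : s
  · rw [pInd_pos hs]; omega
  exact absurd ⟨hp, hq, hr, hs⟩ h

section Count
variable {m : ℕ} [NeZero m] {W : Set (Fin m ⊕ Fin m)}
open Sum Finset

lemma sum_shift (f : Fin m → ℕ) (c : Fin m) : (∑ i : Fin m, f (i + c)) = ∑ i : Fin m, f i := by
  simpa using Equiv.sum_comp (Equiv.addRight c) f

lemma counting (hm : 5 ≤ m)
    (h1a : ∀ i : Fin m, ¬(inr (i - 1) ∉ W ∧ inl i ∉ W ∧ inl (i + 1) ∉ W ∧ inr (i + 1) ∉ W))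
    (h1b : ∀ i : Fin m, ¬(inl i ∉ W ∧ inr i ∉ W ∧ inr (i + 1) ∉ W ∧ inl (i + 2) ∉ W))
    (uTE : ∀ i j, TripE m W i → TripE m W j → i = j)
    (uTO : ∀ i j, TripO m W i → TripO m W j → i = j) :
    4 * m ≤ 5 * W.ncard + 4 := by
  classical
  -- per-window bounds
  have h_e : ∀ i : Fin m, 2 ≤ pInd (inl i ∈ W) + pInd (inr i ∈ W) + pInd (inl (i + 1) ∈ W)
      + pInd (inr (i + 1) ∈ W) + pInd (inl (i + 2) ∈ W)
      + pInd (TripO m W i ∨ TripO m W (i + 1)) := by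
    intro i
    have t0 := pInd_le_one (inl i ∈ W)
    have t1 := pInd_le_one (inr i ∈ W)
    have t2 := pInd_le_one (inl (i + 1) ∈ W)
    have t3 := pInd_le_one (inr (i + 1) ∈ W)
    have t4 := pInd_le_one (inl (i + 2) ∈ W)
    have hC := pInd_or4 (h1b i)
    by_cases c5 : TripO m W i ∨ TripO m W (i + 1)
    · rw [pInd_pos c5]
      omega
    · rw [pInd_neg c5]
      push_neg at c5
      have hA := pInd_or3 (show ¬(inl i ∉ W ∧ inr i ∉ W ∧ inl (i + 1) ∉ W) from c5.1)
      have hB := pInd_or3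
        (show ¬(inl (i + 1) ∉ W ∧ inr (i + 1) ∉ W ∧ inl (i + 1 + 1) ∉ W) from c5.2)
      have e2 : i + 1 + 1 = i + 2 := by open Fin.CommRing in ring
      rw [e2] at hB
      omega
  have h_o : ∀ i : Fin m, 2 ≤ pInd (inr i ∈ W) + pInd (inl (i + 1) ∈ W) + pInd (inr (i + 1) ∈ W)
      + pInd (inl (i + 2) ∈ W) + pInd (inr (i + 2) ∈ W)
      + pInd (TripE m W (i + 1) ∨ TripE m W (i + 2)) := by
    intro i
    have e1 : i + 1 - 1 = i := by open Fin.CommRing in ring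
    have e2 : i + 1 + 1 = i + 2 := by open Fin.CommRing in ring
    have e3 : i + 2 - 1 = i + 1 := by open Fin.CommRing in ring
    have H := h1a (i + 1)
    rw [e1, e2] at H
    have t0 := pInd_le_one (inr i ∈ W)
    have t1 := pInd_le_one (inl (i + 1) ∈ W)
    have t2 := pInd_le_one (inr (i + 1) ∈ W)
    have t3 := pInd_le_one (inl (i + 2) ∈ W)
    have t4 := pInd_le_one (inr (i + 2) ∈ W)
    have hC := pInd_or4 H
    by_cases c5 : TripE m W (i + 1) ∨ TripE m W (i + 2)
    · rw [pInd_pos c5]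
      omega
    · rw [pInd_neg c5]
      push_neg at c5
      have hA := pInd_or3
        (show ¬(inr (i + 1 - 1) ∉ W ∧ inl (i + 1) ∉ W ∧ inr (i + 1) ∉ W) from c5.1)
      have hB := pInd_or3
        (show ¬(inr (i + 2 - 1) ∉ W ∧ inl (i + 2) ∉ W ∧ inr (i + 2) ∉ W) from c5.2)
      rw [e1] at hA
      rw [e3] at hB
      omega
  -- deficiency sums
  have hEO : (∑ i : Fin m, pInd (TripO m W i ∨ TripO m W (i + 1))) ≤ 2 := by
    by_cases hex : ∃ c, TripO m W c
    · obtain ⟨c, hc⟩ := hex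
      calc (∑ i : Fin m, pInd (TripO m W i ∨ TripO m W (i + 1)))
          ≤ ∑ i : Fin m, ((if i = c then 1 else 0) + (if i = c - 1 then 1 else 0)) := by
            refine Finset.sum_le_sum fun i _ => ?_
            by_cases h : TripO m W i ∨ TripO m W (i + 1)
            · rcases h with h | h
              · have hic : i = c := uTO i c h hc
                subst hic
                simp [pInd, h]
              · have hic : i = c - 1 := by
                  have h2 := uTO (i + 1) c h hc
                  rw [← h2]; open Fin.CommRing in ring
                subst hic
                have h2 := pInd_le_one (TripO m W (c - 1) ∨ TripO m W (c - 1 + 1))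
                have h3 : (if (c - 1 : Fin m) = c - 1 then (1 : ℕ) else 0) = 1 := if_pos rfl
                omega
            · simp [pInd, h]
        _ = 2 := by
            rw [Finset.sum_add_distrib]
            simp [Finset.sum_ite_eq']
    · push_neg at hex
      have : ∀ i ∈ Finset.univ, pInd (TripO m W i ∨ TripO m W (i + 1)) = 0 := by
        intro i _
        have : ¬(TripO m W i ∨ TripO m W (i + 1)) := by
          rintro (h | h)
          exacts [hex i h, hex (i + 1) h]
        simp [pInd, this]
      rw [Finset.sum_congr rfl this]
      simp
  have hEE : (∑ i : Fin m, pInd (TripE m W (i + 1) ∨ TripE m W (i + 2))) ≤ 2 := by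
    by_cases hex : ∃ c, TripE m W c
    · obtain ⟨c, hc⟩ := hex
      calc (∑ i : Fin m, pInd (TripE m W (i + 1) ∨ TripE m W (i + 2)))
          ≤ ∑ i : Fin m, ((if i = c - 1 then 1 else 0) + (if i = c - 2 then 1 else 0)) := by
            refine Finset.sum_le_sum fun i _ => ?_
            by_cases h : TripE m W (i + 1) ∨ TripE m W (i + 2)
            · rcases h with h | h
              · have hic : i = c - 1 := by
                  have h2 := uTE (i + 1) c h hc
                  rw [← h2]; open Fin.CommRing in ring
                subst hic
                have h2 := pInd_le_one (TripE m W (c - 1 + 1) ∨ TripE m W (c - 1 + 2))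
                have h3 : (if (c - 1 : Fin m) = c - 1 then (1 : ℕ) else 0) = 1 := if_pos rfl
                omega
              · have hic : i = c - 2 := by
                  have h2 := uTE (i + 2) c h hc
                  rw [← h2]; open Fin.CommRing in ring
                subst hic
                have h2 := pInd_le_one (TripE m W (c - 2 + 1) ∨ TripE m W (c - 2 + 2))
                have h3 : (if (c - 2 : Fin m) = c - 2 then (1 : ℕ) else 0) = 1 := if_pos rfl
                omega
            · simp [pInd, h]
        _ ≤ 2 := by
            rw [Finset.sum_add_distrib]
            simp [Finset.sum_ite_eq']
    · push_neg at hex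
      have : ∀ i ∈ Finset.univ, pInd (TripE m W (i + 1) ∨ TripE m W (i + 2)) = 0 := by
        intro i _
        have : ¬(TripE m W (i + 1) ∨ TripE m W (i + 2)) := by
          rintro (h | h)
          exacts [hex (i + 1) h, hex (i + 2) h]
        simp [pInd, this]
      rw [Finset.sum_congr rfl this]
      simp
  -- summing the window bounds
  set SA := ∑ i : Fin m, pInd (inl i ∈ W) with hSA
  set SB := ∑ i : Fin m, pInd (inr i ∈ W) with hSB
  have shA1 : (∑ i : Fin m, pInd (inl (i + 1) ∈ W)) = SA := sum_shift (fun j => pInd (inl j ∈ W)) 1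
  have shA2 : (∑ i : Fin m, pInd (inl (i + 2) ∈ W)) = SA := sum_shift (fun j => pInd (inl j ∈ W)) 2
  have shB1 : (∑ i : Fin m, pInd (inr (i + 1) ∈ W)) = SB := sum_shift (fun j => pInd (inr j ∈ W)) 1
  have shB2 : (∑ i : Fin m, pInd (inr (i + 2) ∈ W)) = SB := sum_shift (fun j => pInd (inr j ∈ W)) 2
  have sum_e : 2 * m ≤ 3 * SA + 2 * SB
      + ∑ i : Fin m, pInd (TripO m W i ∨ TripO m W (i + 1)) := by
    have := Finset.sum_le_sum (fun i (_ : i ∈ Finset.univ) => h_e i)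
    simp only [Finset.sum_add_distrib, Finset.sum_const, Finset.card_univ, Fintype.card_fin,
      smul_eq_mul, mul_one] at this
    rw [shA1, shA2, shB1, ← hSA, ← hSB] at this
    omega
  have sum_o : 2 * m ≤ 2 * SA + 3 * SB
      + ∑ i : Fin m, pInd (TripE m W (i + 1) ∨ TripE m W (i + 2)) := by
    have := Finset.sum_le_sum (fun i (_ : i ∈ Finset.univ) => h_o i)
    simp only [Finset.sum_add_distrib, Finset.sum_const, Finset.card_univ, Fintype.card_fin,
      smul_eq_mul, mul_one] at this
    rw [shA1, shA2, shB1, shB2, ← hSB] at this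
    omega
  -- cardinality
  have hcard : W.ncard = SA + SB := by
    have hfin : W.Finite := Set.toFinite W
    rw [Set.ncard_eq_toFinset_card _ hfin]
    rw [show hfin.toFinset = Finset.univ.filter (· ∈ W) by
      ext v
      simp [Set.Finite.mem_toFinset]]
    rw [Finset.card_filter]
    rw [Fintype.sum_sum_type]
    congr 1
  omega

end Count

/-- for `m ≥ 5`, every resolving set of `K_{m,m} \ E(C_{2m})`
has at least `⌊4m/5⌋` vertices. -/
theorem stmt5 (m : ℕ) (hm : 5 ≤ m) (W : Set (Fin m ⊕ Fin m))
    (hW : Resolves (cycGraph m) W) : 4 * m / 5 ≤ W.ncard := by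
  haveI : NeZero m := ⟨by omega⟩
  have key := counting hm (resolve_H1a hm hW) (resolve_H1b hm hW)
    (resolve_TripE hm hW) (resolve_TripO hm hW)
  omega
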